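/- Suppose there is a constant L_p > 0 such that ∫_Θ |p_θ(u) − p_θ(v)| ϑ(dθ) ≤ L_p ρ(u,v) for all u,v ∈ Y. Then the kernel J satisfies Assumption 4.4: for every bounded continuous g : Y × [0,∞) → ℝ, the map (y,t) ↦ ∫_Y g(u,t) J(y,du) = ∫_Θ g(w_θ(y),t) p_θ(y) ϑ(dθ) is jointly continuous on Y × [0,∞). -/

import Mathlib

open MeasureTheory ProbabilityTheory Real Set Filter Topology

noncomputable section

/-- The operator `f ↦ (x ↦ ∫ f dκ(x))` iterated `n` times. -/
def kernelOpIter {Z : Type*} [MeasurableSpace Z] (κ : Kernel Z Z) :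
    ℕ → (Z → ℝ) → Z → ℝ
  | 0, f => f
  | n + 1, f => fun z => ∫ w, kernelOpIter κ n f w ∂(κ z)

/-- The `n`-fold iterate of a kernel (`n = 0` giving the identity kernel). -/
def kIter {Z : Type*} [MeasurableSpace Z] (κ : Kernel Z Z) : ℕ → Kernel Z Z
  | 0 => Kernel.id
  | n + 1 => κ ∘ₖ kIter κ n

/-- `Λ(y,i,t) = ∫₀ᵗ λ(S_i(h,y)) dh`. -/
def cumInt {Y I : Type*} (S : I → ℝ → Y → Y) (lam : Y → ℝ) (y : Y) (i : I) (t : ℝ) : ℝ :=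
  ∫ h in (0:ℝ)..t, lam (S i h y)

/-- `G((y,i),A) = ∫₀^∞ λ(S_i(t,y)) e^{−Λ(y,i,t)} 1_A(S_i(t,y),i) dt`. -/
def Gker {Y I : Type*} (S : I → ℝ → Y → Y) (lam : Y → ℝ)
    (x : Y × I) (A : Set (Y × I)) : ℝ :=
  ∫ t in Ioi (0:ℝ), lam (S x.2 t x.1) * exp (-(cumInt S lam x.1 x.2 t)) *
    A.indicator (fun _ => (1:ℝ)) (S x.2 t x.1, x.2)

/-- `G̃((y,i),A) = ∫₀^∞ e^{−Λ(y,i,t)} 1_A(S_i(t,y),i) dt`. -/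
def Gtil {Y I : Type*} (S : I → ℝ → Y → Y) (lam : Y → ℝ)
    (x : Y × I) (A : Set (Y × I)) : ℝ :=
  ∫ t in Ioi (0:ℝ), exp (-(cumInt S lam x.1 x.2 t)) *
    A.indicator (fun _ => (1:ℝ)) (S x.2 t x.1, x.2)

/-- `W((y,i),A) = ∫_Y Σ_j π_{ij}(u) 1_A(u,j) J(y,du)`. -/
def Wker {Y I : Type*} [MeasurableSpace Y] [Fintype I]
    (pm : I → I → Y → ℝ) (J : Kernel Y Y) (x : Y × I) (A : Set (Y × I)) : ℝ :=
  ∫ u, ∑ j, pm x.2 j u * A.indicator (fun _ => (1:ℝ)) (u, j) ∂(J x.1)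

/-- `W̃((y,i),A) = λ(y)·W((y,i),A)`. -/
def Wtil {Y I : Type*} [MeasurableSpace Y] [Fintype I] (lam : Y → ℝ)
    (pm : I → I → Y → ℝ) (J : Kernel Y Y) (x : Y × I) (A : Set (Y × I)) : ℝ :=
  lam x.1 * Wker pm J x A

/-- `P((y,i),A) = ∫₀^∞ λ(S_i(t,y)) e^{−Λ(y,i,t)} W((S_i(t,y),i),A) dt`. -/
def Pker {Y I : Type*} [MeasurableSpace Y] [Fintype I] (S : I → ℝ → Y → Y) (lam : Y → ℝ)
    (pm : I → I → Y → ℝ) (J : Kernel Y Y) (x : Y × I) (A : Set (Y × I)) : ℝ :=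
  ∫ t in Ioi (0:ℝ), lam (S x.2 t x.1) * exp (-(cumInt S lam x.1 x.2 t)) *
    Wker pm J (S x.2 t x.1, x.2) A

/-- `P_T f(x) = Σ_{n=0}^∞ P̄ⁿ(g_T · (P̄ h_T))((x,0))`. -/
def PTf {Y I : Type*} [MeasurableSpace Y] [MeasurableSpace I] (S : I → ℝ → Y → Y)
    (Pbar : Kernel (Y × I × ℝ) (Y × I × ℝ)) (f : Y × I → ℝ) (T : ℝ) (x : Y × I) : ℝ :=
  ∑' n : ℕ, kernelOpIter Pbar n
    (fun z => (Icc (0:ℝ) T).indicator (fun _ => (1:ℝ)) z.2.2 *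
        f (S z.2.1 (T - z.2.2) z.1, z.2.1) *
        ∫ w, (Ioi T).indicator (fun _ => (1:ℝ)) w.2.2 ∂(Pbar z))
    (x.1, x.2, 0)

/-- `ψ_f((y,i),t,T)`. -/
def psiF {Y I : Type*} [MeasurableSpace Y] [Fintype I] (S : I → ℝ → Y → Y) (lam : Y → ℝ)
    (pm : I → I → Y → ℝ) (J : Kernel Y Y) (f : Y × I → ℝ) (x : Y × I) (t T : ℝ) : ℝ :=
  lam (S x.2 t x.1) * exp (-(cumInt S lam x.1 x.2 t)) *
    ∫ u, ∑ j, pm x.2 j u * exp (-(cumInt S lam u j (T - t))) * f (S j (T - t) u, j)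
      ∂(J (S x.2 t x.1))

/-- The operator `G` acting on functions. -/
def Gop {Y I : Type*} (S : I → ℝ → Y → Y) (lam : Y → ℝ) (f : Y × I → ℝ) (x : Y × I) : ℝ :=
  ∫ t in Ioi (0:ℝ), lam (S x.2 t x.1) * exp (-(cumInt S lam x.1 x.2 t)) * f (S x.2 t x.1, x.2)

/-- The operator `W` acting on functions. -/
def Wop {Y I : Type*} [MeasurableSpace Y] [Fintype I]
    (pm : I → I → Y → ℝ) (J : Kernel Y Y) (f : Y × I → ℝ) (x : Y × I) : ℝ :=
  ∫ u, ∑ j, pm x.2 j u * f (u, j) ∂(J x.1)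

/-- Invariance of a measure for the semigroup `{P_T}`. -/
def isInvariantSemigroup {Y I : Type*} [MeasurableSpace Y] [MeasurableSpace I]
    (S : I → ℝ → Y → Y) (Pbar : Kernel (Y × I × ℝ) (Y × I × ℝ))
    (μ : Measure (Y × I)) : Prop :=
  ∀ T ≥ (0:ℝ), ∀ A : Set (Y × I), MeasurableSet A →
    ∫ x, PTf S Pbar (A.indicator fun _ => (1:ℝ)) T x ∂μ = (μ A).toReal

/-- Invariance of a measure for the kernel `P`. -/
def isInvariantP {Y I : Type*} [MeasurableSpace Y] [MeasurableSpace I] [Fintype I] (S : I → ℝ → Y → Y)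
    (lam : Y → ℝ) (pm : I → I → Y → ℝ) (J : Kernel Y Y) (μ : Measure (Y × I)) : Prop :=
  ∀ A : Set (Y × I), MeasurableSet A → ∫ x, Pker S lam pm J x A ∂μ = (μ A).toReal


theorem IFS_satisfies_assumption44
    {Y : Type*} [MetricSpace Y] [TopologicalSpace.SeparableSpace Y] [CompleteSpace Y]
    [MeasurableSpace Y] [BorelSpace Y]
    {Θ : Type*} [TopologicalSpace Θ] [MeasurableSpace Θ] [BorelSpace Θ] (ϑ : Measure Θ)
    (w : Θ → Y → Y) (hw_cont : ∀ θ, Continuous (w θ))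
    (p : Θ → Y → ℝ) (hp_cont : ∀ θ, Continuous (p θ)) (hp_nonneg : ∀ θ y, 0 ≤ p θ y)
    (hw_meas : Measurable (fun q : Y × Θ => w q.2 q.1))
    (hp_meas : Measurable (fun q : Y × Θ => p q.2 q.1))
    (hp_int : ∀ y, Integrable (fun θ => p θ y) ϑ)
    (hp_prob : ∀ y, ∫ θ, p θ y ∂ϑ = 1)
    (Lp : ℝ) (hLp : 0 < Lp)
    (hA74b : ∀ u v : Y, ∫ θ, |p θ u - p θ v| ∂ϑ ≤ Lp * dist u v) :
    ∀ g : Y × ℝ → ℝ, (∃ M, ∀ q, |g q| ≤ M) →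
      ContinuousOn g ((univ : Set Y) ×ˢ Ici (0:ℝ)) →
      ContinuousOn (fun q : Y × ℝ => ∫ θ, g (w θ q.1, q.2) * p θ q.1 ∂ϑ)
        ((univ : Set Y) ×ˢ Ici (0:ℝ)) := by
  rintro g ⟨M, hM⟩ hg
  set M' : ℝ := max M 0 with hM'def
  have hM'0 : 0 ≤ M' := le_max_right _ _
  set G : Y × ℝ → ℝ := fun q => g (q.1, max q.2 0) with hGdef
  have hGcont : Continuous G := by
    have hφ : Continuous fun q : Y × ℝ => (q.1, max q.2 0) :=
      continuous_fst.prodMk (continuous_snd.max continuous_const)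
    exact hg.comp_continuous hφ (fun q => ⟨mem_univ _, (le_max_right _ _ : (0:ℝ) ≤ max q.2 0)⟩)
  have hGM : ∀ q, |G q| ≤ M' := fun q => (hM _).trans (le_max_left _ _)
  have hmeasθ : ∀ y' : Y, Measurable fun θ => w θ y' := fun y' =>
    hw_meas.comp (measurable_const.prodMk measurable_id)
  have hpmeasθ : ∀ y' : Y, Measurable fun θ => p θ y' := fun y' =>
    hp_meas.comp (measurable_const.prodMk measurable_id)
  have hFmeas : ∀ (y' : Y) (t' : ℝ) (y'' : Y),
      AEStronglyMeasurable (fun θ => G (w θ y', t') * p θ y'') ϑ := by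
    intro y' t' y''
    exact ((hGcont.measurable.comp ((hmeasθ y').prodMk measurable_const)).mul
      (hpmeasθ y'')).aestronglyMeasurable
  have hInt : ∀ (y' : Y) (t' : ℝ) (y'' : Y),
      Integrable (fun θ => G (w θ y', t') * p θ y'') ϑ := by
    intro y' t' y''
    refine Integrable.mono ((hp_int y'').const_mul M') (hFmeas y' t' y'') ?_
    filter_upwards with θ
    rw [Real.norm_eq_abs, Real.norm_eq_abs, abs_mul, abs_of_nonneg (hp_nonneg _ _), abs_mul,
      abs_of_nonneg hM'0, abs_of_nonneg (hp_nonneg _ _)]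
    exact mul_le_mul_of_nonneg_right (hGM _) (hp_nonneg _ _)
  have key : Continuous fun q : Y × ℝ => ∫ θ, G (w θ q.1, q.2) * p θ q.1 ∂ϑ := by
    rw [continuous_iff_continuousAt]
    intro x0
    have hA : Tendsto (fun q : Y × ℝ => ∫ θ, G (w θ q.1, q.2) * p θ x0.1 ∂ϑ) (𝓝 x0)
        (𝓝 (∫ θ, G (w θ x0.1, x0.2) * p θ x0.1 ∂ϑ)) := by
      apply tendsto_integral_filter_of_dominated_convergence (fun θ => M' * p θ x0.1)
      · filter_upwards with q using hFmeas q.1 q.2 x0.1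
      · filter_upwards with q
        filter_upwards with θ
        rw [Real.norm_eq_abs, abs_mul, abs_of_nonneg (hp_nonneg _ _)]
        exact mul_le_mul_of_nonneg_right (hGM _) (hp_nonneg _ _)
      · exact (hp_int x0.1).const_mul M'
      · filter_upwards with θ
        exact ((hGcont.comp
          (((hw_cont θ).comp continuous_fst).prodMk continuous_snd)).tendsto x0).mul
          tendsto_const_nhds
    have hIntSub : ∀ q : Y × ℝ,
        Integrable (fun θ => G (w θ q.1, q.2) * (p θ q.1 - p θ x0.1)) ϑ := by
      intro q
      have := (hInt q.1 q.2 q.1).sub (hInt q.1 q.2 x0.1)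
      simpa [mul_sub, Pi.sub_def] using this
    have hB : Tendsto (fun q : Y × ℝ => ∫ θ, G (w θ q.1, q.2) * (p θ q.1 - p θ x0.1) ∂ϑ)
        (𝓝 x0) (𝓝 0) := by
      apply squeeze_zero_norm (a := fun q : Y × ℝ => M' * (Lp * dist q.1 x0.1))
      · intro q
        calc ‖∫ θ, G (w θ q.1, q.2) * (p θ q.1 - p θ x0.1) ∂ϑ‖
            ≤ ∫ θ, ‖G (w θ q.1, q.2) * (p θ q.1 - p θ x0.1)‖ ∂ϑ :=
              norm_integral_le_integral_norm _
          _ ≤ ∫ θ, M' * |p θ q.1 - p θ x0.1| ∂ϑ := by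
              apply integral_mono (hIntSub q).norm
                (((hp_int q.1).sub (hp_int x0.1)).abs.const_mul M')
              intro θ
              simp only [Pi.sub_apply, Real.norm_eq_abs, abs_mul]
              exact mul_le_mul_of_nonneg_right (hGM _) (abs_nonneg _)
          _ = M' * ∫ θ, |p θ q.1 - p θ x0.1| ∂ϑ := integral_const_mul _ _
          _ ≤ M' * (Lp * dist q.1 x0.1) :=
              mul_le_mul_of_nonneg_left (hA74b _ _) hM'0
      · have : Tendsto (fun q : Y × ℝ => M' * (Lp * dist q.1 x0.1)) (𝓝 x0)
            (𝓝 (M' * (Lp * dist x0.1 x0.1))) := by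
          refine Tendsto.const_mul _ (Tendsto.const_mul _ ?_)
          exact (continuous_fst.dist continuous_const).tendsto x0
        simpa using this
    have hcomb : (fun q : Y × ℝ => ∫ θ, G (w θ q.1, q.2) * p θ q.1 ∂ϑ)
        = fun q : Y × ℝ => (∫ θ, G (w θ q.1, q.2) * p θ x0.1 ∂ϑ)
          + ∫ θ, G (w θ q.1, q.2) * (p θ q.1 - p θ x0.1) ∂ϑ := by
      funext q
      rw [← integral_add (hInt q.1 q.2 x0.1) (hIntSub q)]
      congr 1; funext θ; ring
    rw [ContinuousAt, hcomb]
    simpa using hA.add hB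
  refine key.continuousOn.congr ?_
  intro q hq
  simp only [hGdef]
  rw [max_eq_left hq.2]
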